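/- For the devastating system, and for every i ∈ {1,…,n}, the polynomial x_i · q lies in the ideal I generated by p₁,…,pₙ in ℂ[x₁,…,xₙ]. -/

import Mathlib

open MvPolynomial

set_option maxHeartbeats 1000000 in
lemma my_det_diag_add {m : Type*} [Fintype m] [DecidableEq m] {R : Type*} [CommRing R]
    (d : m → R) (A : Matrix m m R) :
    (Matrix.diagonal d + A).det =
      ∑ s : Finset m, (∏ i ∈ s, d i) *
        (Matrix.of fun i j : {x : m // x ∉ s} => A i.1 j.1).det := by
  have h0 : (Matrix.diagonal d + A).det
      = (Matrix.detRowAlternating : (m → R) [⋀^m]→ₗ[R] R).toMultilinearMap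
          (Matrix.diagonal d + A) := rfl
  rw [h0]; erw [MultilinearMap.map_add_univ]
  refine Finset.sum_congr rfl fun s _ => ?_
  have key := (Matrix.detRowAlternating :
      (m → R) [⋀^m]→ₗ[R] R).toMultilinearMap.map_piecewise_smul d
      (s.piecewise (fun i => Pi.single i (1:R)) A) s
  have h1 : s.piecewise (Matrix.diagonal d : Matrix m m R) A
      = s.piecewise (fun i => d i • (s.piecewise (fun i => Pi.single i (1:R)) A) i)
          (s.piecewise (fun i => Pi.single i (1:R)) A) := by
    funext i
    by_cases hi : i ∈ s
    · simp only [Finset.piecewise, hi, if_true]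
      funext j
      simp only [Matrix.diagonal, Matrix.of_apply, Pi.smul_apply, Pi.single_apply, smul_eq_mul]
      by_cases hij : i = j <;> simp [hij, eq_comm]
    · simp only [Finset.piecewise, hi, if_false]
  rw [h1, key, smul_eq_mul]
  congr 1
  have hB : ((Matrix.detRowAlternating : (m → R) [⋀^m]→ₗ[R] R).toMultilinearMap
      (s.piecewise (fun i => Pi.single i (1:R)) A))
      = (Matrix.of (s.piecewise (fun i => Pi.single i (1:R)) A)).det := rfl
  rw [hB]
  have hzero : ∀ a, a ∈ s → ∀ b, ¬ (b ∈ s) →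
      (Matrix.of (s.piecewise (fun i => Pi.single i (1:R)) A)) a b = 0 := by
    intro a ha b hb
    have hne : b ≠ a := fun h => hb (h ▸ ha)
    show (s.piecewise (fun i => Pi.single i (1:R)) A) a b = 0
    simp only [Finset.piecewise, ha, if_true]
    simp [Pi.single_apply, hne]
  rw [Matrix.twoBlockTriangular_det' _ (· ∈ s) hzero]
  have h4 : (Matrix.toSquareBlockProp
      (Matrix.of (s.piecewise (fun i => Pi.single i (1:R)) A)) (· ∈ s)) = 1 := by
    ext ⟨a, ha⟩ ⟨b, hb⟩
    show (s.piecewise (fun i => Pi.single i (1:R)) A) a b = _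
    simp only [Finset.piecewise, ha, if_true]
    simp [Pi.single_apply, Matrix.one_apply, eq_comm, Subtype.ext_iff]
  have h5 : (Matrix.toSquareBlockProp
      (Matrix.of (s.piecewise (fun i => Pi.single i (1:R)) A)) fun i => ¬ (i ∈ s))
      = (Matrix.of fun i j : {x : m // x ∉ s} => A i.1 j.1) := by
    ext ⟨a, ha⟩ ⟨b, hb⟩
    show (s.piecewise (fun i => Pi.single i (1:R)) A) a b = A a b
    simp only [Finset.piecewise, ha, if_false]
  rw [h4, h5]
  simp

set_option maxHeartbeats 1000000 in
/-- For the devastating system `pᵢ = xᵢ² + ε·∑ⱼ qᵢⱼ xⱼ`, the polynomial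
`x_i · q` lies in the ideal `I = (p₁,…,pₙ)`, where
`q = ∑_{ι ⊆ {1,…,n}} det(ε Q_ι) · ∏_{k∈ι} x_k` and `Q_ι` is the submatrix of `Q`
obtained by deleting the rows and columns with indices in `ι`. -/
theorem stmt_3 (n : ℕ) (hn : 1 ≤ n) (ε : ℝ) (Q : Matrix (Fin n) (Fin n) ℂ)
    (p : Fin n → MvPolynomial (Fin n) ℂ)
    (hp : ∀ i, p i = (X i) ^ 2 + C (ε : ℂ) * ∑ j, C (Q i j) * X j)
    (q : MvPolynomial (Fin n) ℂ)
    (hq : q = ∑ ι : Finset (Fin n),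
        C (Matrix.det (Matrix.of fun (i j : {x : Fin n // x ∉ ι}) =>
            (ε : ℂ) * Q i.1 j.1)) * ∏ k ∈ ι, X k)
    (i : Fin n) :
    X i * q ∈ Ideal.span (Set.range p) := by
  set M : Matrix (Fin n) (Fin n) (MvPolynomial (Fin n) ℂ) :=
    Matrix.diagonal (fun j => X j) + Matrix.of (fun a b => C ((ε:ℂ) * Q a b)) with hM
  -- q = det M
  have hqM : q = M.det := by
    rw [hq, hM, my_det_diag_add]
    refine Finset.sum_congr rfl fun s _ => ?_
    rw [mul_comm]
    congr 1
    simp only [Matrix.of_apply]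
    have : (Matrix.of fun i j : {x : Fin n // x ∉ s} =>
          (C ((ε:ℂ) * Q i.1 j.1) : MvPolynomial (Fin n) ℂ))
        = (Matrix.of fun i j : {x : Fin n // x ∉ s} => ((ε:ℂ) * Q i.1 j.1)).map
            (C : ℂ →+* MvPolynomial (Fin n) ℂ) := by
      ext a b; rfl
    rw [this]
    exact (RingHom.map_det (C : ℂ →+* MvPolynomial (Fin n) ℂ) _)
  -- M *ᵥ X = p
  have hMv : M.mulVec (fun j => X j) = p := by
    funext a
    rw [hp a]
    simp only [Matrix.mulVec, dotProduct, hM, Matrix.add_apply, Matrix.diagonal_apply,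
      Matrix.of_apply, add_mul, Finset.sum_add_distrib]
    congr 1
    · rw [Finset.sum_eq_single a] <;> simp +contextual [sq, eq_comm]
    · rw [Finset.mul_sum]
      refine Finset.sum_congr rfl fun b _ => ?_
      rw [map_mul, mul_assoc]
  -- Cramer's rule: det M • X = adjugate M *ᵥ p
  have key : X i * q = ∑ j, M.adjugate i j * p j := by
    have h := congrArg (fun N : Matrix (Fin n) (Fin n) (MvPolynomial (Fin n) ℂ) =>
      N.mulVec (fun j => X j)) (Matrix.adjugate_mul M)
    simp only [← Matrix.mulVec_mulVec, hMv, Matrix.smul_mulVec, Matrix.one_mulVec] at h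
    have h2 := congrFun h i
    simp only [Matrix.mulVec, dotProduct, Pi.smul_apply, smul_eq_mul] at h2
    rw [hqM, mul_comm, ← h2]
  rw [key]
  exact Ideal.sum_mem _ fun j _ =>
    Ideal.mul_mem_left _ _ (Ideal.subset_span ⟨j, rfl⟩)
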